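/- Let Ω be a set, d ∈ ℕ, let k : Ω × Ω → ℝ^{d×d} be a positive semidefinite matrix-valued kernel, let x₁, …, xₙ ∈ Ω, and let σ ≠ 0. Let K_XX be the (nd)×(nd) block matrix with blocks (K_XX)_{ij} = k(xᵢ, xⱼ) and for x ∈ Ω let K_X(x) be the (nd)×d block-column matrix with blocks (K_X(x))_i = k(xᵢ, x). Then the posterior kernel k_p(x, x') = k(x, x') − K_X(x)ᵀ (K_XX + σ² I_{nd})⁻¹ K_X(x') is a positive semidefinite matrix-valued kernel on Ω. -/

import Mathlib

open Matrix

/-- A matrix-valued kernel `k : Ω × Ω → ℝ^{d×d}` is positive semidefinite if it is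
symmetric (`k x y = (k y x)ᵀ`) and all its Gram "matrices" are positive semidefinite. -/
def IsPSDMatrixKernel {Ω : Type*} {d : ℕ} (k : Ω → Ω → Matrix (Fin d) (Fin d) ℝ) : Prop :=
  (∀ x y : Ω, k x y = (k y x)ᵀ) ∧
  ∀ (m : ℕ) (x : Fin m → Ω) (c : Fin m → (Fin d → ℝ)),
    0 ≤ ∑ i, ∑ j, c i ⬝ᵥ (k (x i) (x j)).mulVec (c j)

private lemma dot_sum_right {α β : Type*} [Fintype α] (u : α → ℝ) (s : Finset β)
    (v : β → α → ℝ) : u ⬝ᵥ (∑ j ∈ s, v j) = ∑ j ∈ s, u ⬝ᵥ v j := by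
  simp only [dotProduct, Finset.sum_apply, Finset.mul_sum]
  exact Finset.sum_comm

private lemma sum_dot_left {α β : Type*} [Fintype α] (u : α → ℝ) (s : Finset β)
    (v : β → α → ℝ) : (∑ j ∈ s, v j) ⬝ᵥ u = ∑ j ∈ s, v j ⬝ᵥ u := by
  simp only [dotProduct, Finset.sum_apply, Finset.sum_mul]
  exact Finset.sum_comm

private lemma mulVec_sum' {α β γ : Type*} [Fintype α] (B : Matrix γ α ℝ) (s : Finset β)
    (v : β → α → ℝ) : B *ᵥ (∑ j ∈ s, v j) = ∑ j ∈ s, B *ᵥ v j := by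
  ext a
  simp only [mulVec, dotProduct, Finset.sum_apply, Finset.mul_sum]
  exact Finset.sum_comm

/-- the Gaussian-process posterior kernel
`k_p(x,x') = k(x,x') − K_X(x)ᵀ (K_XX + σ²I)⁻¹ K_X(x')` obtained from a positive
semidefinite matrix-valued kernel `k`, points `x₁,…,xₙ` and noise `σ ≠ 0` is again a
positive semidefinite matrix-valued kernel. -/
theorem posterior_kernel_is_psd {Ω : Type*} {d n : ℕ}
    (k : Ω → Ω → Matrix (Fin d) (Fin d) ℝ) (hk : IsPSDMatrixKernel k)
    (xs : Fin n → Ω) (σ : ℝ) (hσ : σ ≠ 0)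
    (KXX : Matrix (Fin n × Fin d) (Fin n × Fin d) ℝ)
    (hKXX : ∀ (i j : Fin n) (p q : Fin d), KXX (i, p) (j, q) = k (xs i) (xs j) p q)
    (KX : Ω → Matrix (Fin n × Fin d) (Fin d) ℝ)
    (hKX : ∀ (x : Ω) (i : Fin n) (p q : Fin d), KX x (i, p) q = k (xs i) x p q) :
    IsPSDMatrixKernel (fun x x' =>
      k x x' -
        (KX x)ᵀ * (KXX + σ ^ 2 • (1 : Matrix (Fin n × Fin d) (Fin n × Fin d) ℝ))⁻¹ *
          KX x') := by
  obtain ⟨hsym, hpsd⟩ := hk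
  set A : Matrix (Fin n × Fin d) (Fin n × Fin d) ℝ :=
    KXX + σ ^ 2 • (1 : Matrix (Fin n × Fin d) (Fin n × Fin d) ℝ) with hAdef
  -- Gram identity for KXX
  have gram : ∀ u v : (Fin n × Fin d) → ℝ,
      u ⬝ᵥ KXX *ᵥ v
        = ∑ i, ∑ j, (fun p => u (i, p)) ⬝ᵥ (k (xs i) (xs j)) *ᵥ (fun q => v (j, q)) := by
    intro u v
    simp only [dotProduct, mulVec, Fintype.sum_prod_type, Finset.mul_sum]
    refine Finset.sum_congr rfl fun i _ => ?_
    rw [Finset.sum_comm]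
    simp [hKXX]
  -- cross identity for KX
  have cross : ∀ (u : (Fin n × Fin d) → ℝ) (y : Ω) (cv : Fin d → ℝ),
      u ⬝ᵥ (KX y *ᵥ cv) = ∑ i, (fun p => u (i, p)) ⬝ᵥ (k (xs i) y) *ᵥ cv := by
    intro u y cv
    simp only [dotProduct, mulVec, Fintype.sum_prod_type]
    simp [hKX]
  -- KXX is positive semidefinite
  have hKps : KXX.PosSemidef := by
    rw [posSemidef_iff_dotProduct_mulVec]
    constructor
    · ext ⟨i, p⟩ ⟨j, q⟩
      simp only [conjTranspose_apply, star_trivial, hKXX]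
      rw [hsym (xs i) (xs j)]
      rfl
    · intro v
      have : star v = v := by simp
      rw [this, gram]
      exact hpsd n xs (fun i p => v (i, p))
  have hs2 : (0 : ℝ) < σ ^ 2 := by positivity
  have hI : ((σ ^ 2) • (1 : Matrix (Fin n × Fin d) (Fin n × Fin d) ℝ)).PosDef := by
    rw [smul_one_eq_diagonal]
    exact Matrix.PosDef.diagonal (fun _ => hs2)
  have hApd : A.PosDef := Matrix.PosDef.posSemidef_add hKps hI
  have hAinv : (A⁻¹).PosDef := hApd.inv
  have hAinvT : (A⁻¹)ᵀ = A⁻¹ := by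
    rw [← conjTranspose_eq_transpose_of_trivial]
    exact hAinv.isHermitian
  have hAA : A * A⁻¹ = 1 :=
    Matrix.mul_nonsing_inv A (isUnit_iff_ne_zero.mpr hApd.det_pos.ne')
  constructor
  · -- symmetry
    intro x y
    show k x y - (KX x)ᵀ * A⁻¹ * KX y
        = (k y x - (KX y)ᵀ * A⁻¹ * KX x)ᵀ
    rw [transpose_sub, transpose_mul, transpose_mul, transpose_transpose, hAinvT,
      hsym x y, Matrix.mul_assoc]
  · -- positive semidefiniteness
    intro m x c
    -- abbreviations
    set w : (Fin n × Fin d) → ℝ := ∑ j, KX (x j) *ᵥ c j with hw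
    set z : (Fin n × Fin d) → ℝ := A⁻¹ *ᵥ w with hz
    have hAz : A *ᵥ z = w := by
      rw [hz, mulVec_mulVec, hAA, one_mulVec]
    -- rewrite the goal as Q - w ⬝ᵥ A⁻¹ *ᵥ w
    have key : ∀ i j : Fin m,
        c i ⬝ᵥ ((KX (x i))ᵀ * A⁻¹ * KX (x j)) *ᵥ c j
          = (KX (x i) *ᵥ c i) ⬝ᵥ A⁻¹ *ᵥ (KX (x j) *ᵥ c j) := by
      intro i j
      rw [← mulVec_mulVec, ← mulVec_mulVec, dotProduct_mulVec, vecMul_transpose]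
    have hQsplit :
        ∑ i, ∑ j, c i ⬝ᵥ (k (x i) (x j) - (KX (x i))ᵀ * A⁻¹ * KX (x j)) *ᵥ c j
          = (∑ i, ∑ j, c i ⬝ᵥ (k (x i) (x j)) *ᵥ c j) - w ⬝ᵥ A⁻¹ *ᵥ w := by
      have h2 : ∑ i, ∑ j, c i ⬝ᵥ ((KX (x i))ᵀ * A⁻¹ * KX (x j)) *ᵥ c j
          = w ⬝ᵥ A⁻¹ *ᵥ w := by
        rw [hw, mulVec_sum', dot_sum_right]
        rw [Finset.sum_comm]
        refine Finset.sum_congr rfl fun j _ => ?_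
        rw [sum_dot_left]
        exact Finset.sum_congr rfl fun i _ => key i j
      rw [← h2, ← Finset.sum_sub_distrib]
      refine Finset.sum_congr rfl fun i _ => ?_
      rw [← Finset.sum_sub_distrib]
      refine Finset.sum_congr rfl fun j _ => ?_
      rw [sub_mulVec, dotProduct_sub]
    rw [hQsplit]
    -- the big PSD inequality on the n + m points
    have big := hpsd (n + m) (Fin.append xs x)
      (Fin.append (fun i p => (-z) (i, p)) c)
    rw [Fin.sum_univ_add] at big
    simp only [Fin.sum_univ_add, Fin.append_left, Fin.append_right] at big
    rw [Finset.sum_add_distrib, Finset.sum_add_distrib] at big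
    -- identify the four blocks
    have T11 : ∑ i : Fin n, ∑ j : Fin n,
        (fun p => (-z) (i, p)) ⬝ᵥ (k (xs i) (xs j)) *ᵥ (fun q => (-z) (j, q))
          = z ⬝ᵥ KXX *ᵥ z := by
      rw [← gram]
      simp [mulVec_neg]
    have T12 : ∑ i : Fin n, ∑ j : Fin m,
        (fun p => (-z) (i, p)) ⬝ᵥ (k (xs i) (x j)) *ᵥ c j = -(z ⬝ᵥ w) := by
      rw [Finset.sum_comm]
      have : ∀ j : Fin m, ∑ i : Fin n,
          (fun p => (-z) (i, p)) ⬝ᵥ (k (xs i) (x j)) *ᵥ c j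
            = (-z) ⬝ᵥ (KX (x j) *ᵥ c j) := fun j => (cross (-z) (x j) (c j)).symm
      rw [Finset.sum_congr rfl fun j _ => this j, ← dot_sum_right, ← hw]
      simp
    have T21 : ∑ i : Fin m, ∑ j : Fin n,
        c i ⬝ᵥ (k (x i) (xs j)) *ᵥ (fun q => (-z) (j, q)) = -(z ⬝ᵥ w) := by
      have : ∀ (i : Fin m) (j : Fin n),
          c i ⬝ᵥ (k (x i) (xs j)) *ᵥ (fun q => (-z) (j, q))
            = (fun q => (-z) (j, q)) ⬝ᵥ (k (xs j) (x i)) *ᵥ c i := by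
        intro i j
        rw [hsym (x i) (xs j), dotProduct_mulVec, vecMul_transpose, dotProduct_comm]
      rw [Finset.sum_congr rfl fun i _ => Finset.sum_congr rfl fun j _ => this i j]
      have : ∀ i : Fin m, ∑ j : Fin n,
          (fun q => (-z) (j, q)) ⬝ᵥ (k (xs j) (x i)) *ᵥ c i
            = (-z) ⬝ᵥ (KX (x i) *ᵥ c i) := fun i => (cross (-z) (x i) (c i)).symm
      rw [Finset.sum_congr rfl fun i _ => this i, ← dot_sum_right, ← hw]
      simp
    rw [T11, T12, T21] at big
    -- compute z ⬝ᵥ KXX *ᵥ z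
    have zKz : z ⬝ᵥ KXX *ᵥ z = z ⬝ᵥ w - σ ^ 2 * (z ⬝ᵥ z) := by
      have hK : KXX = A - σ ^ 2 • (1 : Matrix (Fin n × Fin d) (Fin n × Fin d) ℝ) := by
        rw [hAdef, add_sub_cancel_right]
      rw [hK, sub_mulVec, dotProduct_sub, hAz, smul_mulVec, one_mulVec,
        dotProduct_smul, smul_eq_mul]
    have wAiw : w ⬝ᵥ A⁻¹ *ᵥ w = z ⬝ᵥ w := by
      rw [← hz, dotProduct_comm]
    have hzz : 0 ≤ z ⬝ᵥ z := by
      unfold dotProduct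
      exact Finset.sum_nonneg fun i _ => mul_self_nonneg _
    rw [zKz] at big
    rw [wAiw]
    nlinarith [mul_nonneg hs2.le hzz]
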